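/- Let ⋆ ∈ 𝒫, i.e. a bilinear product on A⟨X⟩ with unit the empty word and recursion au⋆bv = a(u⋆bv) + b(au⋆v) + [a,b](u⋆v) for a symmetric bracket [·,·] on AX satisfying [[a,b],c]=[a,[b,c]]. Then ⋆ is associative: (w₁⋆w₂)⋆w₃ = w₁⋆(w₂⋆w₃) for all words w₁,w₂,w₃, so (A⟨X⟩, ⋆) is a commutative A-algebra. -/

import Mathlib

open Finsupp Finset Filter

/-- A word `w` seen as an element of the free module `A⟨X⟩` (coefficient 1). -/
noncomputable def delta (A : Type*) [CommRing A] {X : Type*} (w : List X) : List X →₀ A :=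
  Finsupp.single w 1

/-- Left concatenation by a letter, as a linear map on `A⟨X⟩`. -/
noncomputable def lcons (A : Type*) [CommRing A] {X : Type*} (x : X) :
    (List X →₀ A) →ₗ[A] (List X →₀ A) :=
  Finsupp.lmapDomain A A (List.cons x)

section Aux
variable {A X : Type*} [CommRing A]

lemma lcons_delta (x : X) (w : List X) : lcons A x (delta A w) = delta A (x :: w) := by
  simp [lcons, delta, Finsupp.lmapDomain_apply, Finsupp.mapDomain_single]

lemma single_as_smul (w : List X) (c : A) :
    (Finsupp.single w c : List X →₀ A) = c • delta A w := by
  simp [delta, Finsupp.smul_single]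

variable (star : (List X →₀ A) →ₗ[A] (List X →₀ A) →ₗ[A] (List X →₀ A))
variable (brC : X → X → A) (brX : X → X → X)

lemma unitl' (hunitl : ∀ w : List X, star (delta A []) (delta A w) = delta A w)
    (m : List X →₀ A) : star (delta A []) m = m := by
  induction m using Finsupp.induction_linear with
  | zero => simp
  | add f g hf hg => rw [map_add, hf, hg]
  | single w c => rw [single_as_smul, map_smul, hunitl]

lemma unitr' (hunitr : ∀ w : List X, star (delta A w) (delta A []) = delta A w)
    (m : List X →₀ A) : star m (delta A []) = m := by
  induction m using Finsupp.induction_linear with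
  | zero => simp
  | add f g hf hg => rw [map_add, LinearMap.add_apply, hf, hg]
  | single w c => rw [single_as_smul, map_smul, LinearMap.smul_apply, hunitr]

variable
    (hrec : ∀ (a b : X) (u v : List X),
      star (delta A (a :: u)) (delta A (b :: v)) =
        lcons A a (star (delta A u) (delta A (b :: v)))
          + lcons A b (star (delta A (a :: u)) (delta A v))
          + brC a b • lcons A (brX a b) (star (delta A u) (delta A v)))

include hrec in
lemma recL (x c : X) (t : List X) (m : List X →₀ A) :
    star (lcons A x m) (delta A (c :: t)) =
      lcons A x (star m (delta A (c :: t)))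
        + lcons A c (star (lcons A x m) (delta A t))
        + brC x c • lcons A (brX x c) (star m (delta A t)) := by
  induction m using Finsupp.induction_linear with
  | zero => simp
  | add f g hf hg =>
      simp only [map_add, LinearMap.add_apply, smul_add] at *
      rw [hf, hg]; abel
  | single w r =>
      rw [single_as_smul]
      simp only [map_smul, LinearMap.smul_apply, lcons_delta]
      rw [hrec x c w t]
      module

include hrec in
lemma recR (a y : X) (u : List X) (m : List X →₀ A) :
    star (delta A (a :: u)) (lcons A y m) =
      lcons A a (star (delta A u) (lcons A y m))
        + lcons A y (star (delta A (a :: u)) m)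
        + brC a y • lcons A (brX a y) (star (delta A u) m) := by
  induction m using Finsupp.induction_linear with
  | zero => simp
  | add f g hf hg =>
      simp only [map_add, LinearMap.add_apply, smul_add] at *
      rw [hf, hg]; abel
  | single w r =>
      rw [single_as_smul]
      simp only [map_smul, LinearMap.smul_apply, lcons_delta]
      rw [hrec a y u w]
      module

lemma brsym_lcons
    (hsym : ∀ a b : X, brC a b • delta A [brX a b] = brC b a • delta A [brX b a])
    (a b : X) (m : List X →₀ A) :
    brC a b • lcons A (brX a b) m = brC b a • lcons A (brX b a) m := by
  have h := hsym a b
  rw [delta, delta, Finsupp.smul_single, Finsupp.smul_single, smul_eq_mul, smul_eq_mul,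
    mul_one, mul_one] at h
  rcases (Finsupp.single_eq_single_iff _ _ _ _).1 h with ⟨h1, h2⟩ | ⟨h1, h2⟩
  · have hx : brX a b = brX b a := by simpa using h1
    rw [hx, h2]
  · rw [h1, h2, zero_smul, zero_smul]

lemma brassoc_lcons
    (hassoc : ∀ a b c : X,
      (brC a b * brC (brX a b) c) • delta A [brX (brX a b) c]
        = (brC b c * brC a (brX b c)) • delta A [brX a (brX b c)])
    (a b c : X) (m : List X →₀ A) :
    (brC a b * brC (brX a b) c) • lcons A (brX (brX a b) c) m
      = (brC b c * brC a (brX b c)) • lcons A (brX a (brX b c)) m := by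
  have h := hassoc a b c
  rw [delta, delta, Finsupp.smul_single, Finsupp.smul_single, smul_eq_mul, smul_eq_mul,
    mul_one, mul_one] at h
  rcases (Finsupp.single_eq_single_iff _ _ _ _).1 h with ⟨h1, h2⟩ | ⟨h1, h2⟩
  · have hx : brX (brX a b) c = brX a (brX b c) := by simpa using h1
    rw [hx, h2]
  · rw [h1, h2, zero_smul, zero_smul]

end Aux

/-- any product `⋆ ∈ 𝒫` is associative (hence `(A⟨X⟩, ⋆)` is a commutative
`A`-algebra, commutativity being Statement 0). -/
theorem stmt1 {A X : Type*} [CommRing A]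
    (star : (List X →₀ A) →ₗ[A] (List X →₀ A) →ₗ[A] (List X →₀ A))
    (brC : X → X → A) (brX : X → X → X)
    (hunitl : ∀ w : List X, star (delta A []) (delta A w) = delta A w)
    (hunitr : ∀ w : List X, star (delta A w) (delta A []) = delta A w)
    (hrec : ∀ (a b : X) (u v : List X),
      star (delta A (a :: u)) (delta A (b :: v)) =
        lcons A a (star (delta A u) (delta A (b :: v)))
          + lcons A b (star (delta A (a :: u)) (delta A v))
          + brC a b • lcons A (brX a b) (star (delta A u) (delta A v)))
    (hsym : ∀ a b : X, brC a b • delta A [brX a b] = brC b a • delta A [brX b a])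
    (hassoc : ∀ a b c : X,
      (brC a b * brC (brX a b) c) • delta A [brX (brX a b) c]
        = (brC b c * brC a (brX b c)) • delta A [brX a (brX b c)]) :
    (∀ w₁ w₂ w₃ : List X,
        star (star (delta A w₁) (delta A w₂)) (delta A w₃)
          = star (delta A w₁) (star (delta A w₂) (delta A w₃))) ∧
    (∀ w₁ w₂ : List X, star (delta A w₁) (delta A w₂) = star (delta A w₂) (delta A w₁)) := by
  have ul := unitl' star hunitl
  have ur := unitr' star hunitr
  have rL := recL star brC brX hrec
  have rR := recR star brC brX hrec
  have bS := brsym_lcons brC brX hsym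
  have bA := brassoc_lcons brC brX hassoc
  constructor
  · intro w₁
    induction w₁ with
    | nil => intro w₂ w₃; rw [hunitl, ul]
    | cons a u ih1 =>
      intro w₂
      induction w₂ with
      | nil => intro w₃; rw [hunitr, hunitl]
      | cons b v ih2 =>
        intro w₃
        induction w₃ with
        | nil => rw [ur, hunitr]
        | cons c t ih3 =>
          have hL : star (star (delta A (a::u)) (delta A (b::v))) (delta A (c::t)) =
              lcons A a (star (star (delta A u) (delta A (b::v))) (delta A (c::t)))
              + lcons A b (star (star (delta A (a::u)) (delta A v)) (delta A (c::t)))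
              + brC a b • lcons A (brX a b)
                  (star (star (delta A u) (delta A v)) (delta A (c::t)))
              + lcons A c (star (star (delta A (a::u)) (delta A (b::v))) (delta A t))
              + brC a c • lcons A (brX a c)
                  (star (star (delta A u) (delta A (b::v))) (delta A t))
              + brC b c • lcons A (brX b c)
                  (star (star (delta A (a::u)) (delta A v)) (delta A t))
              + brC a b • (brC (brX a b) c • lcons A (brX (brX a b) c)
                  (star (star (delta A u) (delta A v)) (delta A t))) := by
            rw [hrec a b u v]
            simp only [map_add, map_smul, LinearMap.add_apply, LinearMap.smul_apply, smul_add]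
            rw [rL a c t, rL b c t, rL (brX a b) c t]
            module
          have hR : star (delta A (a::u)) (star (delta A (b::v)) (delta A (c::t))) =
              lcons A a (star (delta A u) (star (delta A (b::v)) (delta A (c::t))))
              + lcons A b (star (delta A (a::u)) (star (delta A v) (delta A (c::t))))
              + brC a b • lcons A (brX a b)
                  (star (delta A u) (star (delta A v) (delta A (c::t))))
              + lcons A c (star (delta A (a::u)) (star (delta A (b::v)) (delta A t)))
              + brC a c • lcons A (brX a c)
                  (star (delta A u) (star (delta A (b::v)) (delta A t)))
              + brC b c • lcons A (brX b c)
                  (star (delta A (a::u)) (star (delta A v) (delta A t)))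
              + brC b c • (brC a (brX b c) • lcons A (brX a (brX b c))
                  (star (delta A u) (star (delta A v) (delta A t)))) := by
            rw [hrec b c v t]
            simp only [map_add, map_smul, LinearMap.add_apply, LinearMap.smul_apply, smul_add]
            rw [rR a b u, rR a c u, rR a (brX b c) u]
            module
          rw [hL, hR, ih1 (b::v) (c::t), ih2 (c::t), ih1 v (c::t), ih3, ih1 (b::v) t,
            ih2 t, ih1 v t, smul_smul, bA a b c]
          module
  · intro w₁
    induction w₁ with
    | nil => intro w₂; rw [hunitl, hunitr]
    | cons a u ih1 =>
      intro w₂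
      induction w₂ with
      | nil => rw [hunitr, hunitl]
      | cons b v ih2 =>
        rw [hrec a b u v, hrec b a v u, ih1 (b::v), ih2, ih1 v, bS a b]
        abel
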